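/- Let A be a Noetherian commutative ring, let T be a Noetherian A-algebra, and let I ⊆ T be an ideal generated by elements y_1, ..., y_n such that T/I is a finitely generated A-module. Let t_1, ..., t_d ∈ T be elements whose classes modulo I generate T/I as an A-module. Then for every t ≥ 1, the classes of t_1, ..., t_d in T/I^t generate T/I^t as a module over A[x_1, ..., x_n]/(x_1, ..., x_n)^t, via the ring homomorphism A[x_1, ..., x_n]/(x_1, ..., x_n)^t → T/I^t induced by x_i ↦ y_i. -/

import Mathlib

open Pointwise


/-- The ring homomorphism `A[x₁,…,xₙ]/(x₁,…,xₙ)ᵗ → T/Iᵗ` induced by `xᵢ ↦ yᵢ`, where the `yᵢ`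
generate the ideal `I`. -/
noncomputable def inducedQuotientMap (A : Type) [CommRing A] (T : Type) [CommRing T]
    [Algebra A T] (I : Ideal T) (n : ℕ) (y : Fin n → T) (hy : Ideal.span (Set.range y) = I)
    (t : ℕ) :
    (MvPolynomial (Fin n) A ⧸
        (Ideal.span (Set.range (MvPolynomial.X : Fin n → MvPolynomial (Fin n) A))) ^ t) →+*
      (T ⧸ I ^ t) :=
  Ideal.Quotient.lift _
    ((Ideal.Quotient.mk (I ^ t)).comp (MvPolynomial.aeval y : MvPolynomial (Fin n) A →ₐ[A] T)) <| by
    intro p hp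
    have h1 : Ideal.map ((MvPolynomial.aeval y : MvPolynomial (Fin n) A →ₐ[A] T) : _ →+* T)
        (Ideal.span (Set.range (MvPolynomial.X : Fin n → MvPolynomial (Fin n) A))) = I := by
      rw [Ideal.map_span, ← hy]
      congr 1
      rw [← Set.range_comp]
      exact congrArg _ (funext fun i => by simp)
    have h2 : MvPolynomial.aeval y p ∈ I ^ t := by
      have h3 := Ideal.mem_map_of_mem
        ((MvPolynomial.aeval y : MvPolynomial (Fin n) A →ₐ[A] T) : _ →+* T) hp
      rwa [Ideal.map_pow, h1] at h3
    show Ideal.Quotient.mk (I ^ t) (MvPolynomial.aeval y p) = 0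
    rwa [Ideal.Quotient.eq_zero_iff_mem]

/-- **Generators of `T/Iᵗ` over `A[x]/(x)ᵗ`.**  If the classes of `τ₁, …, τ_d` modulo `I`
generate `T/I` as an `A`-module, then for every `t ≥ 1` the classes of the `τᵢ` generate `T/Iᵗ`
as a module over `A[x₁,…,xₙ]/(x₁,…,xₙ)ᵗ` (via the ring map induced by `xᵢ ↦ yᵢ`). -/
theorem stmt4 (A : Type) [CommRing A] [IsNoetherianRing A]
    (T : Type) [CommRing T] [Algebra A T] [IsNoetherianRing T]
    (I : Ideal T) (n : ℕ) (y : Fin n → T) (hy : Ideal.span (Set.range y) = I)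
    [Module.Finite A (T ⧸ I)]
    (d : ℕ) (τ : Fin d → T)
    (hτ : Submodule.span A (Set.range fun i => Ideal.Quotient.mk I (τ i)) = ⊤) :
    ∀ t : ℕ, 1 ≤ t →
      @Submodule.span
        (MvPolynomial (Fin n) A ⧸
          (Ideal.span (Set.range (MvPolynomial.X : Fin n → MvPolynomial (Fin n) A))) ^ t)
        (T ⧸ I ^ t) _ _
        (RingHom.toModule (inducedQuotientMap A T I n y hy t))
        (Set.range fun i => Ideal.Quotient.mk (I ^ t) (τ i)) = ⊤ := by
  intro t _ht
  letI : Module (MvPolynomial (Fin n) A ⧸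
      (Ideal.span (Set.range (MvPolynomial.X : Fin n → MvPolynomial (Fin n) A))) ^ t)
      (T ⧸ I ^ t) := RingHom.toModule (inducedQuotientMap A T I n y hy t)
  set f := inducedQuotientMap A T I n y hy t with hf
  set S : Submodule (MvPolynomial (Fin n) A ⧸
      (Ideal.span (Set.range (MvPolynomial.X : Fin n → MvPolynomial (Fin n) A))) ^ t)
      (T ⧸ I ^ t) :=
    Submodule.span _ (Set.range fun i => Ideal.Quotient.mk (I ^ t) (τ i)) with hS
  show S = ⊤
  -- smul description
  have hsmul : ∀ (r) (v : T ⧸ I ^ t), r • v = f r * v := fun _ _ => rfl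
  have hfmk : ∀ p : MvPolynomial (Fin n) A,
      f (Ideal.Quotient.mk _ p) = Ideal.Quotient.mk (I ^ t) (MvPolynomial.aeval y p) := fun p => rfl
  -- A-scalar closure of S
  have hA : ∀ (a : A) (v : T ⧸ I ^ t), v ∈ S → a • v ∈ S := by
    intro a v hv
    have : a • v = (Ideal.Quotient.mk ((Ideal.span (Set.range (MvPolynomial.X : Fin n → MvPolynomial (Fin n) A))) ^ t) (MvPolynomial.C a)) • v := by
      rw [hsmul, hfmk, Algebra.smul_def]
      congr 1
      rw [MvPolynomial.aeval_C, Ideal.Quotient.mk_algebraMap]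
    rw [this]
    exact Submodule.smul_mem S _ hv
  -- aeval-hits elements of set powers of range y
  have haev : ∀ (k : ℕ) (g : T), g ∈ ((Set.range y : Set T)) ^ k → ∃ q : MvPolynomial (Fin n) A,
      MvPolynomial.aeval y q = g := by
    intro k
    induction k with
    | zero => intro g hg; rw [pow_zero, Set.mem_one] at hg; exact ⟨1, by simp [hg]⟩
    | succ k ih =>
      intro g hg
      rw [pow_succ] at hg
      obtain ⟨a, ha, b, hb, rfl⟩ := hg
      obtain ⟨q, hq⟩ := ih a ha
      obtain ⟨i, rfl⟩ := hb
      exact ⟨q * MvPolynomial.X i, by simp [hq]⟩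
  -- membership of set pow in ideal pow
  have hsp : ∀ (k : ℕ) (g : T), g ∈ ((Set.range y : Set T)) ^ k → g ∈ I ^ k := by
    intro k g hg
    have h1 : (Ideal.span (Set.range y)) ^ k = Ideal.span ((Set.range y : Set T) ^ k) :=
      Submodule.span_pow _ _
    rw [← hy, h1]
    exact Ideal.subset_span hg
  -- decomposition of any element of T
  have hdec : ∀ c : T, ∃ w ∈ Submodule.span A (Set.range τ), c - w ∈ I := by
    intro c
    have : Ideal.Quotient.mk I c ∈ Submodule.span A
        (Set.range fun i => Ideal.Quotient.mk I (τ i)) := hτ ▸ Submodule.mem_top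
    have hrange : (Set.range fun i => Ideal.Quotient.mk I (τ i)) =
        (Ideal.Quotient.mkₐ A I) '' (Set.range τ) := by
      rw [← Set.range_comp]; rfl
    rw [hrange] at this
    erw [← Submodule.map_span (Ideal.Quotient.mkₐ A I).toLinearMap] at this
    obtain ⟨w, hw, hw2⟩ := this
    refine ⟨w, hw, ?_⟩
    rw [AlgHom.toLinearMap_apply] at hw2
    rw [Ideal.Quotient.mkₐ_eq_mk] at hw2
    exact (Ideal.Quotient.eq).1 hw2.symm
  -- the key claim
  have key : ∀ (j k : ℕ), t ≤ k + j → ∀ x ∈ I ^ k, Ideal.Quotient.mk (I ^ t) x ∈ S := by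
    intro j
    induction j with
    | zero =>
      intro k hk x hx
      have : x ∈ I ^ t := Ideal.pow_le_pow_right (by omega) hx
      rw [Ideal.Quotient.eq_zero_iff_mem.2 this]
      exact Submodule.zero_mem S
    | succ j ih =>
      intro k hk x hx
      have h1 : (Ideal.span (Set.range y)) ^ k = Ideal.span ((Set.range y : Set T) ^ k) :=
        Submodule.span_pow _ _
      rw [← hy, h1] at hx
      have main : ∀ c : T, Ideal.Quotient.mk (I ^ t) (c * x) ∈ S := by
        refine Submodule.span_induction ?_ ?_ ?_ ?_ hx
        · -- generators: g ∈ (range y)^k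
          intro g hg c
          obtain ⟨w, hw, hr⟩ := hdec c
          have hcw : c * g = w * g + (c - w) * g := by ring
          rw [hcw, map_add]
          refine Submodule.add_mem S ?_ ?_
          · -- w * g with w ∈ span_A τ
            refine Submodule.span_induction (p := fun w _ => Ideal.Quotient.mk (I ^ t) (w * g) ∈ S)
              ?_ ?_ ?_ ?_ hw
            · rintro _ ⟨i, rfl⟩
              obtain ⟨q, hq⟩ := haev k g hg
              have : Ideal.Quotient.mk (I ^ t) (τ i * g) =
                  (Ideal.Quotient.mk ((Ideal.span (Set.range (MvPolynomial.X :
                    Fin n → MvPolynomial (Fin n) A))) ^ t) q) •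
                    (Ideal.Quotient.mk (I ^ t) (τ i)) := by
                rw [hsmul, hfmk, hq, ← map_mul, mul_comm]
              rw [this]
              exact Submodule.smul_mem S _ (Submodule.subset_span ⟨i, rfl⟩)
            · simp only [zero_mul, map_zero]; exact Submodule.zero_mem S
            · intro a b _ _ ha hb
              rw [add_mul, map_add]; exact Submodule.add_mem S ha hb
            · intro a m _ hm
              rw [smul_mul_assoc]
              have hq : Ideal.Quotient.mk (I ^ t) (a • (m * g)) =
                  a • Ideal.Quotient.mk (I ^ t) (m * g) :=
                map_smul (Ideal.Quotient.mkₐ A (I ^ t)) a (m * g)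
              rw [hq]
              exact hA a _ hm
          · -- (c - w) * g ∈ I^(k+1)
            have h1 : (c - w) * g ∈ I ^ (k + 1) := by
              have h2 := Ideal.mul_mem_mul (hsp k g hg) hr
              rw [← pow_succ] at h2
              rwa [show (c - w) * g = g * (c - w) from mul_comm _ _]
            exact ih (k + 1) (by omega) _ h1
        · intro c; rw [mul_zero, map_zero]; exact Submodule.zero_mem S
        · intro a b _ _ ha hb c
          rw [mul_add, map_add]; exact Submodule.add_mem S (ha c) (hb c)
        · intro s a _ ha c
          rw [smul_eq_mul, show c * (s * a) = (c * s) * a by ring]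
          exact ha (c * s)
      simpa using main 1
  rw [eq_top_iff]
  intro z _
  obtain ⟨x, rfl⟩ := Ideal.Quotient.mk_surjective z
  exact key t 0 (by omega) x (by simp)
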